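/- For every a ≥ 0, all b, c ∈ ℝ and all reals r < s, the inequality ∫_r^s |a x + b − c| dx ≥ a (s − r)² / 4 holds. -/

import Mathlib

open MeasureTheory intervalIntegral

/-- For every `a ≥ 0`, all `b, c` and all reals `r < s`,
`∫_r^s |a x + b - c| dx ≥ a (s - r)² / 4`. -/
theorem integral_abs_linear_lower_bound (a b c r s : ℝ) (ha : 0 ≤ a) (hrs : r < s) :
    a * (s - r) ^ 2 / 4 ≤ ∫ x in r..s, |a * x + b - c| := by
  set m := (r + s) / 2 with hm
  have hrm : r ≤ m := by simp [hm]; linarith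
  have hms : m ≤ s := by simp [hm]; linarith
  have hc : Continuous fun x : ℝ => a * x + b - c := by continuity
  have int1 : IntervalIntegrable (fun x : ℝ => |a * x + b - c|) volume r m :=
    (hc.abs).intervalIntegrable _ _
  have int2 : IntervalIntegrable (fun x : ℝ => |a * x + b - c|) volume m s :=
    (hc.abs).intervalIntegrable _ _
  have key : (∫ x in r..s, |a * x + b - c|) =
      (∫ x in r..m, |a * x + b - c|) + ∫ x in m..s, |a * x + b - c| :=
    (integral_add_adjacent_intervals int1 int2).symm
  have e1 : (∫ x in r..m, (a * x + b - c)) = a * (m ^ 2 - r ^ 2) / 2 + (b - c) * (m - r) := by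
    have : (∫ x in r..m, (a * x + b - c)) = ∫ x in r..m, (a * x + (b - c)) := by
      congr 1; ext x; ring
    rw [this, intervalIntegral.integral_add (f := fun x : ℝ => a * x) ((continuous_const.mul continuous_id').intervalIntegrable _ _)
      (intervalIntegrable_const), intervalIntegral.integral_const_mul, integral_id,
      intervalIntegral.integral_const, smul_eq_mul]
    ring
  have e2 : (∫ x in m..s, (a * x + b - c)) = a * (s ^ 2 - m ^ 2) / 2 + (b - c) * (s - m) := by
    have : (∫ x in m..s, (a * x + b - c)) = ∫ x in m..s, (a * x + (b - c)) := by
      congr 1; ext x; ring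
    rw [this, intervalIntegral.integral_add (f := fun x : ℝ => a * x) ((continuous_const.mul continuous_id').intervalIntegrable _ _)
      (intervalIntegrable_const), intervalIntegral.integral_const_mul, integral_id,
      intervalIntegral.integral_const, smul_eq_mul]
    ring
  have b1 : |∫ x in r..m, (a * x + b - c)| ≤ ∫ x in r..m, |a * x + b - c| :=
    intervalIntegral.abs_integral_le_integral_abs hrm
  have b2 : |∫ x in m..s, (a * x + b - c)| ≤ ∫ x in m..s, |a * x + b - c| :=
    intervalIntegral.abs_integral_le_integral_abs hms
  have hdiff : (∫ x in m..s, (a * x + b - c)) - (∫ x in r..m, (a * x + b - c))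
      = a * (s - r) ^ 2 / 4 := by
    rw [e1, e2, hm]; ring
  have h1 := abs_nonneg (∫ x in r..m, (a * x + b - c))
  have h2 := le_abs_self ((∫ x in m..s, (a * x + b - c)))
  have h3 := neg_abs_le ((∫ x in r..m, (a * x + b - c)))
  rw [key]
  linarith
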